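/- Let C = { (x₀, x₁, x₂, x₃) ∈ ℝ⁴ : x₁x₃ − x₂² = 0 and x₂²x₀ − (x₁² + x₀²)(x₁ − x₀) = 0 }. Then the point p = (1, 0, 0, 0) has real rank exactly 4 with respect to C: p is a sum of 4 elements of C, but p is not a sum of 3 or fewer elements of C. -/

import Mathlib

open scoped BigOperators

/-- The real rank of `p` with respect to a subset `S` of a real vector space:
the least `r : ℕ∞` such that `p` is a sum of `r` elements of `S` (`∞` if none exists). -/
noncomputable def realRank {V : Type*} [AddCommMonoid V] (S : Set V) (p : V) : ℕ∞ :=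
  sInf ((fun n : ℕ => (n : ℕ∞)) ''
    {r : ℕ | ∃ x : Fin r → V, (∀ i, x i ∈ S) ∧ ∑ i, x i = p})

/-- The affine cone in `ℝ⁴` over the space curve cut out by `x₁x₃ - x₂² = 0` and
`x₂²x₀ - (x₁² + x₀²)(x₁ - x₀) = 0`. -/
def spaceCurve : Set (Fin 4 → ℝ) :=
  {x | x 1 * x 3 - x 2 ^ 2 = 0 ∧ x 2 ^ 2 * x 0 - (x 1 ^ 2 + x 0 ^ 2) * (x 1 - x 0) = 0}

lemma curve_x0 {x : Fin 4 → ℝ} (hx : x ∈ spaceCurve) (h : x 0 = 0) : x 1 = 0 := by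
  obtain ⟨h1, h2⟩ := hx
  rw [h] at h2
  have h3 : x 1 ^ 3 = 0 := by linear_combination -h2
  exact pow_eq_zero_iff (by norm_num) |>.mp h3

lemma curve_x1 {x : Fin 4 → ℝ} (hx : x ∈ spaceCurve) (h : x 1 = 0) : x 0 = 0 := by
  obtain ⟨h1, h2⟩ := hx
  rw [h] at h1 h2
  have h4 : x 2 ^ 2 = 0 := by linear_combination -h1
  rw [h4] at h2
  have h3 : x 0 ^ 3 = 0 := by linear_combination h2
  exact pow_eq_zero_iff (by norm_num) |>.mp h3

lemma curve_ineq {x : Fin 4 → ℝ} (hx : x ∈ spaceCurve) : x 0 ^ 2 ≤ x 0 * x 1 := by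
  obtain ⟨h1, h2⟩ := hx
  rcases eq_or_ne (x 0) 0 with h | h
  · simp [h]
  · have hpos : 0 < x 1 ^ 2 + x 0 ^ 2 := by positivity
    have hk : (x 1 - x 0) * x 0 = (x 2 * x 0) ^ 2 / (x 1 ^ 2 + x 0 ^ 2) := by
      rw [eq_div_iff (ne_of_gt hpos)]
      linear_combination (-(x 0)) * h2
    have hnn : 0 ≤ (x 1 - x 0) * x 0 := by rw [hk]; positivity
    nlinarith [hnn]

lemma pair {x w : Fin 4 → ℝ} (hx : x ∈ spaceCurve) (hw : w ∈ spaceCurve)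
    (hm : x 1 * w 3 = x 3 * w 1) : x 1 * w 0 = x 0 * w 1 := by
  rcases eq_or_ne (x 0) 0 with h | hx0
  · rw [h, curve_x0 hx h]; ring
  rcases eq_or_ne (w 0) 0 with h | hw0
  · rw [h, curve_x0 hw h]; ring
  have ha : x 0 ^ 2 ≤ x 0 * x 1 := curve_ineq hx
  have hb : w 0 ^ 2 ≤ w 0 * w 1 := curve_ineq hw
  obtain ⟨hxd, hxc⟩ := hx
  obtain ⟨hwd, hwc⟩ := hw
  have hx0sq : 0 < x 0 ^ 2 := by positivity
  have hw0sq : 0 < w 0 ^ 2 := by positivity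
  have P : x 1 ^ 2 * w 2 ^ 2 = w 1 ^ 2 * x 2 ^ 2 := by
    linear_combination (-(x 1 ^ 2)) * hwd + (x 1 * w 1) * hm + (w 1 ^ 2) * hxd
  have ha' : 0 ≤ x 0 * x 1 - x 0 ^ 2 := by linarith
  have hb' : 0 ≤ w 0 * w 1 - w 0 ^ 2 := by linarith
  have uv : x 0 ^ 2 * w 0 ^ 2 ≤ x 1 * w 1 * (x 0 * w 0) := by
    nlinarith [mul_nonneg ha' hb', mul_nonneg ha' (sq_nonneg (w 0)),
      mul_nonneg hb' (sq_nonneg (x 0))]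
  have Q : 2 * (x 0 ^ 2 * w 0 ^ 2) ≤
      x 1 ^ 2 * w 1 ^ 2 - x 1 * w 1 * (x 0 * w 0) + (x 1 * x 0) * w 0 ^ 2 + (w 1 * w 0) * x 0 ^ 2 := by
    nlinarith [sq_nonneg (x 1 * w 1 - x 0 * w 0), uv, mul_nonneg ha' (sq_nonneg (w 0)),
      mul_nonneg hb' (sq_nonneg (x 0))]
  have G : (w 1 * x 0 - x 1 * w 0) *
      (x 1 ^ 2 * w 1 ^ 2 - x 1 * w 1 * (x 0 * w 0) + (x 1 * x 0) * w 0 ^ 2 + (w 1 * w 0) * x 0 ^ 2) = 0 := by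
    linear_combination (-(x 1 ^ 2 * x 0)) * hwc + (w 1 ^ 2 * w 0) * hxc + (x 0 * w 0) * P
  have hQpos : 0 < x 1 ^ 2 * w 1 ^ 2 - x 1 * w 1 * (x 0 * w 0) + (x 1 * x 0) * w 0 ^ 2 + (w 1 * w 0) * x 0 ^ 2 := by
    nlinarith [mul_pos hx0sq hw0sq]
  rcases mul_eq_zero.mp G with h | h
  · linarith
  · linarith

lemma key (x y z : Fin 4 → ℝ) (hx : x ∈ spaceCurve) (hy : y ∈ spaceCurve) (hz : z ∈ spaceCurve)
    (h1 : x 1 + y 1 + z 1 = 0) (h2 : x 2 + y 2 + z 2 = 0) (h3 : x 3 + y 3 + z 3 = 0) :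
    x 1 * (x 0 + y 0 + z 0) = 0 := by
  have hxd := hx.1
  have hyd := hy.1
  have hzd := hz.1
  have hpxy : x 1 * y 3 + x 3 * y 1 - 2 * (x 2 * y 2) = 0 := by
    linear_combination (x 3 + y 3) * h1 - z 1 * h3 - (x 2 + y 2 - z 2) * h2 + hzd - hxd - hyd
  have hpxz : x 1 * z 3 + x 3 * z 1 - 2 * (x 2 * z 2) = 0 := by
    linear_combination (x 3 + z 3) * h1 - y 1 * h3 - (x 2 + z 2 - y 2) * h2 + hyd - hxd - hzd
  have mxy : x 1 * y 3 = x 3 * y 1 := by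
    have hsq : (x 1 * y 3 - x 3 * y 1) ^ 2 = 0 := by
      linear_combination (x 1 * y 3 + x 3 * y 1 + 2 * (x 2 * y 2)) * hpxy
        - (4 * (y 1 * y 3)) * hxd - (4 * (x 2 * x 2)) * hyd
    have := pow_eq_zero_iff (n := 2) (by norm_num) |>.mp hsq
    linarith
  have mxz : x 1 * z 3 = x 3 * z 1 := by
    have hsq : (x 1 * z 3 - x 3 * z 1) ^ 2 = 0 := by
      linear_combination (x 1 * z 3 + x 3 * z 1 + 2 * (x 2 * z 2)) * hpxz
        - (4 * (z 1 * z 3)) * hxd - (4 * (x 2 * x 2)) * hzd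
    have := pow_eq_zero_iff (n := 2) (by norm_num) |>.mp hsq
    linarith
  have pxy := pair hx hy mxy
  have pxz := pair hx hz mxz
  linear_combination pxy + pxz + x 0 * h1

lemma no3 (x y z : Fin 4 → ℝ) (hx : x ∈ spaceCurve) (hy : y ∈ spaceCurve) (hz : z ∈ spaceCurve)
    (h0 : x 0 + y 0 + z 0 = 1) (h1 : x 1 + y 1 + z 1 = 0) (h2 : x 2 + y 2 + z 2 = 0)
    (h3 : x 3 + y 3 + z 3 = 0) : False := by
  have kx := key x y z hx hy hz h1 h2 h3
  have ky := key y x z hy hx hz (by linarith) (by linarith) (by linarith)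
  have kz := key z x y hz hx hy (by linarith) (by linarith) (by linarith)
  rw [h0, mul_one] at kx
  have e1 : y 0 + x 0 + z 0 = 1 := by linarith
  rw [e1, mul_one] at ky
  have e2 : z 0 + x 0 + y 0 = 1 := by linarith
  rw [e2, mul_one] at kz
  have := curve_x1 hx kx
  have := curve_x1 hy ky
  have := curve_x1 hz kz
  linarith

/-- The point `(1,0,0,0)` has real rank exactly `4` with respect to this curve:
it is a sum of `4` elements of the curve but not of `3` or fewer. -/
theorem statement7 : realRank spaceCurve ![1, 0, 0, 0] = 4 := by
  have hzero : (0 : Fin 4 → ℝ) ∈ spaceCurve := by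
    constructor <;> simp
  have hs5 : Real.sqrt 5 ^ 2 = 5 := Real.sq_sqrt (by norm_num)
  have h4 : 4 ∈ {r : ℕ | ∃ x : Fin r → (Fin 4 → ℝ), (∀ i, x i ∈ spaceCurve) ∧
      ∑ i, x i = ![1, 0, 0, 0]} := by
    refine ⟨![![-1/2, -1, -(Real.sqrt 5)/2, -5/4], ![-1/2, -1, Real.sqrt 5/2, -5/4],
      ![2, 2, 0, 0], ![0, 0, 0, 5/2]], ?_, ?_⟩
    · have hp1 : (![-1/2, -1, -(Real.sqrt 5)/2, -5/4] : Fin 4 → ℝ) ∈ spaceCurve := by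
        constructor <;> norm_num [Matrix.cons_val_two, Matrix.cons_val_three, Matrix.vecHead, Matrix.vecTail] <;> nlinarith [hs5]
      have hp2 : (![-1/2, -1, Real.sqrt 5/2, -5/4] : Fin 4 → ℝ) ∈ spaceCurve := by
        constructor <;> norm_num [Matrix.cons_val_two, Matrix.cons_val_three, Matrix.vecHead, Matrix.vecTail] <;> nlinarith [hs5]
      have hp3 : (![2, 2, 0, 0] : Fin 4 → ℝ) ∈ spaceCurve := by
        constructor <;> norm_num [Matrix.cons_val_two, Matrix.cons_val_three, Matrix.vecHead, Matrix.vecTail]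
      have hp4 : (![0, 0, 0, 5/2] : Fin 4 → ℝ) ∈ spaceCurve := by
        constructor <;> norm_num [Matrix.cons_val_two, Matrix.cons_val_three, Matrix.vecHead, Matrix.vecTail]
      intro i
      fin_cases i <;> assumption
    · funext j
      rw [Fin.sum_univ_four]
      fin_cases j <;> simp <;> ring
  have hlow : ∀ n ∈ {r : ℕ | ∃ x : Fin r → (Fin 4 → ℝ), (∀ i, x i ∈ spaceCurve) ∧
      ∑ i, x i = ![1, 0, 0, 0]}, 4 ≤ n := by
    intro n hn
    by_contra hlt
    push_neg at hlt
    obtain ⟨f, hf, hsum⟩ := hn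
    have hc : ∀ j : Fin 4, (∑ i, f i) j = ![(1:ℝ), 0, 0, 0] j := fun j => congrFun hsum j
    simp only [Finset.sum_apply] at hc
    interval_cases n
    · have := hc 0
      simp at this
    · have h0 := hc 0; have h1 := hc 1; have h2 := hc 2; have h3 := hc 3
      simp [Fin.sum_univ_one] at h0 h1 h2 h3
      exact no3 (f 0) 0 0 (hf 0) hzero hzero (by simpa using h0) (by simpa using h1)
        (by simpa using h2) (by simpa using h3)
    · have h0 := hc 0; have h1 := hc 1; have h2 := hc 2; have h3 := hc 3
      simp [Fin.sum_univ_two] at h0 h1 h2 h3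
      exact no3 (f 0) (f 1) 0 (hf 0) (hf 1) hzero (by simpa using h0) (by simpa using h1)
        (by simpa using h2) (by simpa using h3)
    · have h0 := hc 0; have h1 := hc 1; have h2 := hc 2; have h3 := hc 3
      simp [Fin.sum_univ_three] at h0 h1 h2 h3
      exact no3 (f 0) (f 1) (f 2) (hf 0) (hf 1) (hf 2) (by simpa using h0) (by simpa using h1)
        (by simpa using h2) (by simpa using h3)
  apply le_antisymm
  · exact sInf_le ⟨4, h4, by norm_num⟩
  · refine le_sInf ?_
    rintro b ⟨n, hn, rfl⟩
    have := hlow n hn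
    show (4 : ℕ∞) ≤ (n : ℕ∞)
    exact_mod_cast this
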